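/- Let N ≥ 3 be an integer, μ ∈ (0,1/4), α := 1/2 + √(1/4 − μ), q ∈ (1,2), γ ∈ (1−α, α), let b ≥ max{(4−q)/(q−1)+γ, (N−2)/2, 1}, and R ∈ (0,1]. There exists c₀ > 0 depending only on N, μ, q, b, γ and R such that for every c ≥ c₀ and every z ∈ ℝ^N with z_N = 0, the function w(x) := c·(R² − |x−z|²)^{−b}·x_N^{γ} satisfies Δw(x) + (μ/x_N²)·w(x) ≤ ‖∇w(x)‖^q for every x ∈ ℝ^N with x_N > 0 and |x−z| < R. -/

import Mathlib

open MeasureTheory Metric Set RealInnerProductSpace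

/-- The Laplacian of `u : ℝ^N → ℝ`, as the sum of the second partial derivatives
in the coordinate directions. -/
noncomputable def lap {N : ℕ} (u : EuclideanSpace ℝ (Fin N) → ℝ)
    (x : EuclideanSpace ℝ (Fin N)) : ℝ :=
  ∑ i : Fin N, fderiv ℝ (fun y => fderiv ℝ u y (EuclideanSpace.single i 1)) x
    (EuclideanSpace.single i 1)

/-- The last coordinate index of `Fin N`. -/
def lastIdx (N : ℕ) (h : 0 < N) : Fin N := ⟨N - 1, by omega⟩

section Aux

variable {N : ℕ}

private lemma G_deriv (z : EuclideanSpace ℝ (Fin N)) (R : ℝ) (i : Fin N)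
    {y : EuclideanSpace ℝ (Fin N)}
    (hg : R^2 - ‖y - z‖^2 ≠ 0) (hu : y i ≠ 0) (p r : ℝ) :
    ∃ D : EuclideanSpace ℝ (Fin N) →L[ℝ] ℝ,
      HasFDerivAt (fun w => (R^2 - ‖w - z‖^2)^p * (w i)^r) D y ∧
      ∀ v, D v = (R^2 - ‖y - z‖^2)^p * (r * (y i)^(r-1) * v i)
        + (y i)^r * (p * (R^2 - ‖y - z‖^2)^(p-1) * (-2 * ⟪y - z, v⟫)) := by
  have h1 := HasFDerivAt.const_sub (((hasFDerivAt_id y).sub_const z).norm_sq) (R^2)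
  have h2 := (Real.hasDerivAt_rpow_const (p := p) (Or.inl hg)).comp_hasFDerivAt y h1
  have h3 : HasFDerivAt (fun w : EuclideanSpace ℝ (Fin N) => w i)
      (EuclideanSpace.proj (𝕜 := ℝ) i) y := (EuclideanSpace.proj (𝕜 := ℝ) i).hasFDerivAt
  have h4 := (Real.hasDerivAt_rpow_const (p := r) (Or.inl hu)).comp_hasFDerivAt y h3
  refine ⟨_, h2.mul h4, fun v => ?_⟩
  have hproj : (EuclideanSpace.proj (𝕜 := ℝ) i) v = v i := rfl
  simp only [ContinuousLinearMap.add_apply, ContinuousLinearMap.coe_smul', Pi.smul_apply,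
    ContinuousLinearMap.neg_apply, ContinuousLinearMap.coe_comp', Function.comp_apply,
    ContinuousLinearMap.coe_id', id_eq, innerSL_apply_apply, smul_eq_mul, nsmul_eq_mul,
    Nat.cast_ofNat, hproj]
  ring

private lemma inner_single (y z : EuclideanSpace ℝ (Fin N)) (j : Fin N) :
    ⟪y - z, EuclideanSpace.single j (1:ℝ)⟫ = y j - z j := by
  rw [EuclideanSpace.inner_single_right]; simp [PiLp.sub_apply]

/-- First partial derivatives of the barrier. -/
private lemma fderiv_apply_eq (z : EuclideanSpace ℝ (Fin N)) (R c b γ : ℝ) (i j : Fin N)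
    {y : EuclideanSpace ℝ (Fin N)} (hg : 0 < R^2 - ‖y - z‖^2) (hu : 0 < y i) :
    fderiv ℝ (fun w => c * (R^2 - ‖w - z‖^2)^(-b) * (w i)^γ) y (EuclideanSpace.single j 1)
      = c * ((γ * (EuclideanSpace.single j (1:ℝ) i))
            * ((R^2 - ‖y - z‖^2)^(-b) * (y i)^(γ-1))
          + (2*b) * (((R^2 - ‖y - z‖^2)^(-b-1) * (y i)^γ) * (y j - z j))) := by
  obtain ⟨D, hD, hDv⟩ := G_deriv z R i hg.ne' hu.ne' (-b) γ
  have hf : HasFDerivAt (fun w => c * (R^2 - ‖w - z‖^2)^(-b) * (w i)^γ) (c • D) y := by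
    simpa only [mul_assoc] using hD.const_mul c
  rw [hf.fderiv]
  simp only [ContinuousLinearMap.coe_smul', Pi.smul_apply, smul_eq_mul, hDv, inner_single]
  have : (-b : ℝ) - 1 = -b-1 := by ring
  rw [this]
  ring

/-- Second partial derivatives of the barrier. -/
private lemma second_deriv (z x : EuclideanSpace ℝ (Fin N)) (R c b γ : ℝ) (i j : Fin N)
    (hg : 0 < R^2 - ‖x - z‖^2) (hu : 0 < x i) :
    fderiv ℝ (fun y => fderiv ℝ (fun w => c * (R^2 - ‖w - z‖^2)^(-b) * (w i)^γ) y
        (EuclideanSpace.single j 1)) x (EuclideanSpace.single j 1)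
      = c * ((γ * (EuclideanSpace.single j (1:ℝ) i)) *
            ((R^2 - ‖x - z‖^2)^(-b) * ((γ-1) * (x i)^(γ-1-1) * (EuclideanSpace.single j (1:ℝ) i))
              + (x i)^(γ-1) * ((-b) * (R^2 - ‖x - z‖^2)^(-b-1) * (-2 * (x j - z j))))
          + (2*b) * (((R^2 - ‖x - z‖^2)^(-b-1) * (x i)^γ) * 1
              + (x j - z j) *
                ((R^2 - ‖x - z‖^2)^(-b-1) * (γ * (x i)^(γ-1) * (EuclideanSpace.single j (1:ℝ) i))
                  + (x i)^γ * ((-b-1) * (R^2 - ‖x - z‖^2)^(-b-1-1) * (-2 * (x j - z j)))))) := by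
  obtain ⟨D1, hD1, hD1v⟩ := G_deriv z R i hg.ne' hu.ne' (-b) (γ-1)
  obtain ⟨D2, hD2, hD2v⟩ := G_deriv z R i hg.ne' hu.ne' (-b-1) γ
  have haff : HasFDerivAt (fun w : EuclideanSpace ℝ (Fin N) => w j - z j)
      (EuclideanSpace.proj (𝕜 := ℝ) j) x :=
    ((EuclideanSpace.proj (𝕜 := ℝ) j).hasFDerivAt).sub_const (z j)
  have hΦ : HasFDerivAt
      (fun y => c * ((γ * (EuclideanSpace.single j (1:ℝ) i))
            * ((R^2 - ‖y - z‖^2)^(-b) * (y i)^(γ-1))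
          + (2*b) * (((R^2 - ‖y - z‖^2)^(-b-1) * (y i)^γ) * (y j - z j))))
      (c • ((γ * (EuclideanSpace.single j (1:ℝ) i)) • D1
        + (2*b) • (((R^2 - ‖x - z‖^2)^(-b-1) * (x i)^γ) • (EuclideanSpace.proj (𝕜 := ℝ) j)
            + (x j - z j) • D2))) x :=
    ((hD1.const_mul (γ * (EuclideanSpace.single j (1:ℝ) i))).add
      ((hD2.mul haff).const_mul (2*b))).const_mul c
  have hUopen : IsOpen {y : EuclideanSpace ℝ (Fin N) | 0 < R^2 - ‖y - z‖^2 ∧ 0 < y i} := by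
    apply IsOpen.inter
    · exact isOpen_lt continuous_const
        (continuous_const.sub (((continuous_id.sub continuous_const).norm).pow 2))
    · exact isOpen_lt continuous_const (EuclideanSpace.proj (𝕜 := ℝ) i).continuous
  have hEv : (fun y => fderiv ℝ (fun w => c * (R^2 - ‖w - z‖^2)^(-b) * (w i)^γ) y
        (EuclideanSpace.single j 1))
      =ᶠ[nhds x] (fun y => c * ((γ * (EuclideanSpace.single j (1:ℝ) i))
            * ((R^2 - ‖y - z‖^2)^(-b) * (y i)^(γ-1))
          + (2*b) * (((R^2 - ‖y - z‖^2)^(-b-1) * (y i)^γ) * (y j - z j)))) :=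
    Filter.eventuallyEq_of_mem (hUopen.mem_nhds ⟨hg, hu⟩)
      (fun y hy => fderiv_apply_eq z R c b γ i j hy.1 hy.2)
  rw [hEv.fderiv_eq, hΦ.fderiv]
  have hproj : (EuclideanSpace.proj (𝕜 := ℝ) j) (EuclideanSpace.single j (1:ℝ)) = 1 := by
    simp [EuclideanSpace.single_apply]
  simp only [ContinuousLinearMap.coe_smul', Pi.smul_apply, ContinuousLinearMap.add_apply,
    smul_eq_mul, hD1v, hD2v, inner_single, hproj]

/-- The Laplacian of the barrier. -/
private lemma lap_formula (z x : EuclideanSpace ℝ (Fin N)) (R c b γ : ℝ) (i : Fin N)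
    (hz : z i = 0) (hg : 0 < R^2 - ‖x - z‖^2) (hu : 0 < x i) :
    lap (fun w => c * (R^2 - ‖w - z‖^2)^(-b) * (w i)^γ) x
      = c * (2*b*N) * ((R^2 - ‖x - z‖^2)^(-b-1) * (x i)^γ)
        + c * (4*b*(b+1)) * ((R^2 - ‖x - z‖^2)^(-b-2) * (x i)^γ) * ‖x - z‖^2
        + c * (γ*(γ-1)) * ((R^2 - ‖x - z‖^2)^(-b) * (x i)^(γ-2))
        + c * (4*b*γ) * ((R^2 - ‖x - z‖^2)^(-b-1) * (x i)^γ) := by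
  have hnorm : ‖x - z‖^2 = ∑ j, (x j - z j)^2 := by
    rw [← real_inner_self_eq_norm_sq]
    rw [PiLp.inner_apply]
    simp only [PiLp.sub_apply, RCLike.inner_apply, conj_trivial, sq]
  have hupow1 : (x i)^(γ-1) * (x i) = (x i)^γ := by
    rw [Real.rpow_sub_one hu.ne']; field_simp
  have hupow2 : (x i)^(γ-1-1) = (x i)^(γ-2) := by
    rw [show γ-1-1 = γ-2 by ring]
  have hTj : ∀ j : Fin N,
      c * ((γ * (EuclideanSpace.single j (1:ℝ) i)) *
            ((R^2 - ‖x - z‖^2)^(-b) * ((γ-1) * (x i)^(γ-1-1) * (EuclideanSpace.single j (1:ℝ) i))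
              + (x i)^(γ-1) * ((-b) * (R^2 - ‖x - z‖^2)^(-b-1) * (-2 * (x j - z j))))
          + (2*b) * (((R^2 - ‖x - z‖^2)^(-b-1) * (x i)^γ) * 1
              + (x j - z j) *
                ((R^2 - ‖x - z‖^2)^(-b-1) * (γ * (x i)^(γ-1) * (EuclideanSpace.single j (1:ℝ) i))
                  + (x i)^γ * ((-b-1) * (R^2 - ‖x - z‖^2)^(-b-1-1) * (-2 * (x j - z j))))))
      = c * (2*b) * ((R^2 - ‖x - z‖^2)^(-b-1) * (x i)^γ)
        + c * (4*b*(b+1)) * ((R^2 - ‖x - z‖^2)^(-b-2) * (x i)^γ) * (x j - z j)^2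
        + (if j = i then
            c * (γ*(γ-1)) * ((R^2 - ‖x - z‖^2)^(-b) * (x i)^(γ-2))
            + c * (4*b*γ) * ((R^2 - ‖x - z‖^2)^(-b-1) * (x i)^γ) else 0) := by
    intro j
    have he : (-b-1-1 : ℝ) = -b-2 := by ring
    by_cases hj : j = i
    · subst hj
      simp only [EuclideanSpace.single_apply, if_pos rfl, hz, sub_zero, if_pos, hupow2, he]
      rw [← hupow1]
      ring
    · have hij : ¬ i = j := fun h => hj h.symm
      simp only [EuclideanSpace.single_apply, if_neg hij, if_neg hj, he]
      ring
  unfold lap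
  calc (∑ j : Fin N, fderiv ℝ (fun y => fderiv ℝ
          (fun w => c * (R^2 - ‖w - z‖^2)^(-b) * (w i)^γ) y
          (EuclideanSpace.single j 1)) x (EuclideanSpace.single j 1))
      = ∑ j : Fin N,
        (c * (2*b) * ((R^2 - ‖x - z‖^2)^(-b-1) * (x i)^γ)
        + c * (4*b*(b+1)) * ((R^2 - ‖x - z‖^2)^(-b-2) * (x i)^γ) * (x j - z j)^2
        + (if j = i then
            c * (γ*(γ-1)) * ((R^2 - ‖x - z‖^2)^(-b) * (x i)^(γ-2))
            + c * (4*b*γ) * ((R^2 - ‖x - z‖^2)^(-b-1) * (x i)^γ) else 0)) := by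
        refine Finset.sum_congr rfl fun j _ => ?_
        rw [second_deriv z x R c b γ i j hg hu, hTj j]
    _ = _ := by
        rw [Finset.sum_add_distrib, Finset.sum_add_distrib, Finset.sum_const,
          Finset.sum_ite_eq' Finset.univ i, ← Finset.mul_sum, ← hnorm]
        simp [Finset.card_univ]
        ring

private lemma exponent_ineq (q γ b : ℝ) (h1 : 1 < q) (h2 : q < 2) (h3 : 0 < γ)
    (hb' : 4 - q + γ*(q-1) ≤ b*(q-1)) :
    (-b-1)*((q - γ*(q-1))/2) + (-b)*((q + γ*(q-1))/2) ≤ -b-2 := by nlinarith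

private lemma fderiv_eq_inner_gradient (f : EuclideanSpace ℝ (Fin N) → ℝ)
    (x v : EuclideanSpace ℝ (Fin N)) :
    fderiv ℝ f x v = ⟪gradient f x, v⟫ := by
  rw [← InnerProductSpace.toDual_apply_apply, gradient, LinearIsometryEquiv.apply_symm_apply]

end Aux

set_option maxHeartbeats 2000000 in
/-- The half-space case of the barrier of Proposition A.1 when `μ < 1/4`:
`w(x) = c (R² - |x-z|²)^{-b} x_N^γ` is a supersolution. -/
theorem stmt_14 (N : ℕ) (hN : 3 ≤ N) (μ α q γ b R : ℝ)
    (hμ : μ ∈ Set.Ioo (0:ℝ) (1/4)) (hα : α = 1/2 + Real.sqrt (1/4 - μ))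
    (hq : q ∈ Set.Ioo (1:ℝ) 2) (hγ : γ ∈ Set.Ioo (1 - α) α)
    (hb : max (max ((4 - q) / (q - 1) + γ) (((N : ℝ) - 2) / 2)) 1 ≤ b)
    (hR : R ∈ Set.Ioc (0:ℝ) 1) :
    ∃ c₀ : ℝ, 0 < c₀ ∧
      ∀ c ≥ c₀, ∀ z : EuclideanSpace ℝ (Fin N), z (lastIdx N (by omega)) = 0 →
        ∀ x : EuclideanSpace ℝ (Fin N), 0 < x (lastIdx N (by omega)) → ‖x - z‖ < R →
          lap (fun y => c * (R ^ 2 - ‖y - z‖ ^ 2) ^ (-b)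
                * (y (lastIdx N (by omega))) ^ γ) x
            + (μ / (x (lastIdx N (by omega))) ^ 2) *
                (c * (R ^ 2 - ‖x - z‖ ^ 2) ^ (-b) * (x (lastIdx N (by omega))) ^ γ)
            ≤ ‖gradient (fun y => c * (R ^ 2 - ‖y - z‖ ^ 2) ^ (-b)
                * (y (lastIdx N (by omega))) ^ γ) x‖ ^ q := by
  obtain ⟨hμ0, hμ4⟩ := hμ
  obtain ⟨hq1, hq2⟩ := hq
  obtain ⟨hγl, hγu⟩ := hγ
  obtain ⟨hR0, hR1⟩ := hR
  have hN0 : (0:ℝ) ≤ (N:ℝ) := Nat.cast_nonneg N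
  have hsq : Real.sqrt (1/4 - μ) ^ 2 = 1/4 - μ := Real.sq_sqrt (by linarith)
  have hsqnn : 0 ≤ Real.sqrt (1/4 - μ) := Real.sqrt_nonneg _
  have hα1 : α < 1 := by nlinarith [hsq, hsqnn]
  have hγ0 : 0 < γ := by linarith
  have hγ1 : γ < 1 := by
    have : α < 1 := hα1
    linarith
  have hb1 : (1:ℝ) ≤ b := le_trans (le_max_right _ _) hb
  have hbB : (4 - q) / (q - 1) + γ ≤ b :=
    le_trans (le_trans (le_max_left _ _) (le_max_left _ _)) hb
  have hq1' : (0:ℝ) < q - 1 := by linarith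
  have hαμ : α - α^2 = μ := by rw [hα]; linear_combination -hsq
  have hγμ : γ^2 - γ + μ ≤ 0 := by
    nlinarith [mul_pos (sub_pos.2 hγl) (sub_pos.2 hγu), hαμ]
  have hb' : 4 - q + γ*(q-1) ≤ b*(q-1) := by
    have h := mul_le_mul_of_nonneg_right hbB (le_of_lt hq1')
    rwa [add_mul, div_mul_cancel₀ _ (ne_of_gt hq1')] at h
  -- exponents
  set t1 : ℝ := (q - γ*(q-1))/2 with ht1def
  set t2 : ℝ := (q + γ*(q-1))/2 with ht2def
  have ht1 : 0 < t1 := by rw [ht1def]; nlinarith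
  have ht2 : 0 < t2 := by rw [ht2def]; nlinarith
  have ht12 : t1 + t2 = q := by rw [ht1def, ht2def]; ring
  -- constants
  set K : ℝ := 4*b*(b+1) + 2*b*((N:ℝ) + 2*γ) with hKdef
  have hK0 : 0 < K := by rw [hKdef]; nlinarith
  set m : ℝ := (2*b)^t1 * γ^t2 with hmdef
  have hm0 : 0 < m := mul_pos (Real.rpow_pos_of_pos (by linarith) _)
    (Real.rpow_pos_of_pos hγ0 _)
  refine ⟨max 1 ((K/m)^(1/(q-1))), lt_of_lt_of_le one_pos (le_max_left _ _), ?_⟩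
  intro c hc z hz x hxN hxz
  have hc1 : (1:ℝ) ≤ c := le_trans (le_max_left _ _) hc
  have hc0 : (0:ℝ) < c := by linarith
  set i : Fin N := lastIdx N (by omega) with hidef
  have hzi : z i = 0 := hz
  have hui : 0 < x i := hxN
  show lap (fun w => c * (R^2 - ‖w - z‖^2)^(-b) * (w i)^γ) x
      + (μ / (x i)^2) * (c * (R^2 - ‖x - z‖^2)^(-b) * (x i)^γ)
    ≤ ‖gradient (fun w => c * (R^2 - ‖w - z‖^2)^(-b) * (w i)^γ) x‖ ^ q
  set u : ℝ := x i with hudef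
  set g : ℝ := R^2 - ‖x - z‖^2 with hgdef
  set s : ℝ := ‖x - z‖^2 with hsdef
  have hs0 : (0:ℝ) ≤ s := by rw [hsdef]; positivity
  have hsR : s < R^2 := by
    rw [hsdef]
    exact pow_lt_pow_left₀ hxz (norm_nonneg _) (by norm_num)
  have hg0 : 0 < g := by rw [hgdef]; rw [hsdef] at hsR; linarith
  have hg1 : g ≤ 1 := by rw [hgdef]; nlinarith
  have hs1 : s ≤ 1 := by nlinarith
  -- positivity of powers
  have hgp : ∀ e : ℝ, 0 < g^e := fun e => Real.rpow_pos_of_pos hg0 e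
  have hup : ∀ e : ℝ, 0 < u^e := fun e => Real.rpow_pos_of_pos hui e
  -- rewrite the Laplacian
  rw [lap_formula z x R c b γ i hzi hg0 hui]
  -- the μ-term
  have hu2 : u^((2:ℝ)) = u^(2:ℕ) := by
    rw [show ((2:ℝ)) = ((2:ℕ):ℝ) by norm_num, Real.rpow_natCast]
  have hμterm : (μ / u^2) * (c * g^(-b) * u^γ) = c * μ * (g^(-b) * u^(γ-2)) := by
    have h1 : u^(γ-2) = u^γ / u^((2:ℝ)) := by
      rw [Real.rpow_sub hui]
    rw [h1, hu2]
    field_simp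
  -- bound for the left-hand side
  have hgpow : g^(-b-1) ≤ g^(-b-2) :=
    Real.rpow_le_rpow_of_exponent_ge hg0 hg1 (by linarith)
  have hLHS : c * (2*b*N) * (g^(-b-1) * u^γ)
        + c * (4*b*(b+1)) * (g^(-b-2) * u^γ) * s
        + c * (γ*(γ-1)) * (g^(-b) * u^(γ-2))
        + c * (4*b*γ) * (g^(-b-1) * u^γ)
        + (μ / u^2) * (c * g^(-b) * u^γ)
      ≤ c * K * (g^(-b-2) * u^γ) := by
    rw [hμterm]
    have hneg : c * (γ*(γ-1)) * (g^(-b) * u^(γ-2)) + c * μ * (g^(-b) * u^(γ-2)) ≤ 0 := by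
      have heq : c * (γ*(γ-1)) * (g^(-b) * u^(γ-2)) + c * μ * (g^(-b) * u^(γ-2))
          = (γ^2 - γ + μ) * (c * (g^(-b) * u^(γ-2))) := by ring
      rw [heq]
      apply mul_nonpos_of_nonpos_of_nonneg hγμ
      exact mul_nonneg hc0.le (mul_pos (hgp (-b)) (hup (γ-2))).le
    have h2b : (0:ℝ) ≤ 2*b := by linarith
    have hco1 : (0:ℝ) ≤ c * (2*b*N) := by
      rw [show (2*b*(N:ℝ)) = (2*b)*(N:ℝ) by ring]
      exact mul_nonneg hc0.le (mul_nonneg h2b hN0)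
    have hco2 : (0:ℝ) ≤ c * (4*b*(b+1)) * (g^(-b-2) * u^γ) :=
      mul_nonneg (mul_nonneg hc0.le (mul_nonneg (by linarith) (by linarith)))
        (mul_pos (hgp _) (hup _)).le
    have hco4 : (0:ℝ) ≤ c * (4*b*γ) :=
      mul_nonneg hc0.le (mul_nonneg (by linarith) hγ0.le)
    have hug : (0:ℝ) ≤ u^γ := (hup γ).le
    have i1 : c * (2*b*N) * (g^(-b-1) * u^γ) ≤ c * (2*b*N) * (g^(-b-2) * u^γ) :=
      mul_le_mul_of_nonneg_left (mul_le_mul_of_nonneg_right hgpow hug) hco1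
    have i2 : c * (4*b*(b+1)) * (g^(-b-2) * u^γ) * s
        ≤ c * (4*b*(b+1)) * (g^(-b-2) * u^γ) * 1 :=
      mul_le_mul_of_nonneg_left hs1 hco2
    have i4 : c * (4*b*γ) * (g^(-b-1) * u^γ) ≤ c * (4*b*γ) * (g^(-b-2) * u^γ) :=
      mul_le_mul_of_nonneg_left (mul_le_mul_of_nonneg_right hgpow hug) hco4
    have hfin : c * (2*b*N) * (g^(-b-2) * u^γ)
        + c * (4*b*(b+1)) * (g^(-b-2) * u^γ) * 1
        + c * (4*b*γ) * (g^(-b-2) * u^γ) = c * K * (g^(-b-2) * u^γ) := by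
      rw [hKdef]; ring
    linarith
  -- the gradient lower bound
  set A : ℝ := 2*b*(g^(-b-1) * u^(γ+1)) with hAdef
  set B : ℝ := γ*(g^(-b) * u^(γ-1)) with hBdef
  have hA0 : 0 < A := by
    rw [hAdef]; exact mul_pos (by linarith) (mul_pos (hgp _) (hup _))
  have hB0 : 0 < B := by
    rw [hBdef]; exact mul_pos hγ0 (mul_pos (hgp _) (hup _))
  have hP : fderiv ℝ (fun w => c * (R^2 - ‖w - z‖^2)^(-b) * (w i)^γ) x
      (EuclideanSpace.single i 1) = c * (A + B) := by
    rw [fderiv_apply_eq z R c b γ i i hg0 hui]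
    have h1 : EuclideanSpace.single i (1:ℝ) i = 1 := by
      simp [EuclideanSpace.single_apply]
    rw [h1, hzi, hAdef, hBdef, ← hgdef, ← hudef,
      show u^(γ+1) = u^γ * u from Real.rpow_add_one hui.ne' γ]
    ring
  have hgradge : c * (A + B) ≤ ‖gradient (fun w => c * (R^2 - ‖w - z‖^2)^(-b) * (w i)^γ) x‖ := by
    rw [← hP, fderiv_eq_inner_gradient]
    have h2 := real_inner_le_norm
      (gradient (fun w => c * (R^2 - ‖w - z‖^2)^(-b) * (w i)^γ) x) (EuclideanSpace.single i 1)
    rwa [EuclideanSpace.norm_single, norm_one, mul_one] at h2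
  -- lower bound for (c(A+B))^q
  have hAB0 : (0:ℝ) < A + B := by linarith
  have hABq : A^t1 * B^t2 ≤ (A+B)^q := by
    calc A^t1 * B^t2 ≤ (A+B)^t1 * (A+B)^t2 := by
          apply mul_le_mul (Real.rpow_le_rpow hA0.le (by linarith) ht1.le)
            (Real.rpow_le_rpow hB0.le (by linarith) ht2.le)
            (Real.rpow_nonneg hB0.le _) (Real.rpow_nonneg hAB0.le _)
      _ = (A+B)^q := by rw [← Real.rpow_add hAB0, ht12]
  have hEle : (-b-1)*t1 + (-b)*t2 ≤ -b-2 := by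
    rw [ht1def, ht2def]; exact exponent_ineq q γ b hq1 hq2 hγ0 hb'
  have hABlow : m * (g^(-b-2) * u^γ) ≤ A^t1 * B^t2 := by
    have e1 : A^t1 = (2*b)^t1 * (g^((-b-1)*t1) * u^((γ+1)*t1)) := by
      rw [hAdef, Real.mul_rpow (by linarith) (mul_pos (hgp _) (hup _)).le,
        Real.mul_rpow (hgp _).le (hup _).le,
        ← Real.rpow_mul hg0.le, ← Real.rpow_mul hui.le]
    have e2 : B^t2 = γ^t2 * (g^((-b)*t2) * u^((γ-1)*t2)) := by
      rw [hBdef, Real.mul_rpow hγ0.le (mul_pos (hgp _) (hup _)).le,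
        Real.mul_rpow (hgp _).le (hup _).le,
        ← Real.rpow_mul hg0.le, ← Real.rpow_mul hui.le]
    rw [e1, e2]
    have e3 : (2*b)^t1 * (g^((-b-1)*t1) * u^((γ+1)*t1)) * (γ^t2 * (g^((-b)*t2) * u^((γ-1)*t2)))
        = m * ((g^((-b-1)*t1) * g^((-b)*t2)) * (u^((γ+1)*t1) * u^((γ-1)*t2))) := by
      rw [hmdef]; ring
    rw [e3, ← Real.rpow_add hg0, ← Real.rpow_add hui,
      show (γ+1)*t1 + (γ-1)*t2 = γ by rw [ht1def, ht2def]; ring]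
    apply mul_le_mul_of_nonneg_left _ hm0.le
    exact mul_le_mul_of_nonneg_right
      (Real.rpow_le_rpow_of_exponent_ge hg0 hg1 hEle) (hup γ).le
  -- the coefficient inequality
  have hcoeff : c * K ≤ c^q * m := by
    have hcq : K/m ≤ c^(q-1) := by
      have h2 : ((K/m)^(1/(q-1))) ≤ c := le_trans (le_max_right _ _) hc
      have h3 : ((K/m)^(1/(q-1)))^(q-1) = K/m := by
        rw [← Real.rpow_mul (div_nonneg hK0.le hm0.le),
          one_div_mul_cancel (ne_of_gt hq1'), Real.rpow_one]
      calc K/m = ((K/m)^(1/(q-1)))^(q-1) := h3.symm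
        _ ≤ c^(q-1) := Real.rpow_le_rpow (Real.rpow_nonneg
            (div_nonneg hK0.le hm0.le) _) h2 hq1'.le
    have hKm : K ≤ c^(q-1) * m := (div_le_iff₀ hm0).mp hcq
    have hcpow : c^(q-1) * c = c^q := by
      rw [← Real.rpow_add_one hc0.ne' (q-1), show q-1+1 = q by ring]
    calc c * K ≤ c * (c^(q-1) * m) := mul_le_mul_of_nonneg_left hKm hc0.le
      _ = c^q * m := by rw [← hcpow]; ring
  -- assemble
  have hRHS : c * K * (g^(-b-2) * u^γ)
      ≤ ‖gradient (fun w => c * (R^2 - ‖w - z‖^2)^(-b) * (w i)^γ) x‖ ^ q := by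
    have hgu0 : (0:ℝ) ≤ g^(-b-2) * u^γ := (mul_pos (hgp _) (hup _)).le
    calc c * K * (g^(-b-2) * u^γ) ≤ (c^q * m) * (g^(-b-2) * u^γ) :=
          mul_le_mul_of_nonneg_right hcoeff hgu0
      _ = c^q * (m * (g^(-b-2) * u^γ)) := by ring
      _ ≤ c^q * (A^t1 * B^t2) :=
          mul_le_mul_of_nonneg_left hABlow (Real.rpow_nonneg hc0.le _)
      _ ≤ c^q * (A+B)^q :=
          mul_le_mul_of_nonneg_left hABq (Real.rpow_nonneg hc0.le _)
      _ = (c * (A+B))^q := (Real.mul_rpow hc0.le hAB0.le).symm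
      _ ≤ ‖gradient (fun w => c * (R^2 - ‖w - z‖^2)^(-b) * (w i)^γ) x‖ ^ q :=
          Real.rpow_le_rpow (mul_pos hc0 hAB0).le hgradge (by linarith)
  calc c * (2*b*N) * (g^(-b-1) * u^γ)
        + c * (4*b*(b+1)) * (g^(-b-2) * u^γ) * s
        + c * (γ*(γ-1)) * (g^(-b) * u^(γ-2))
        + c * (4*b*γ) * (g^(-b-1) * u^γ)
        + (μ / u^2) * (c * g^(-b) * u^γ)
      ≤ c * K * (g^(-b-2) * u^γ) := hLHS
    _ ≤ _ := hRHS
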